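/- Let 0 < 3ε < 1, M₁, M₂ > 0, and let m ≥ 0 be an integer. Suppose h₁, h₂ : [0, ∞) × (ℤ³ \ {0}) → ℂ³ satisfy |h_i(s, k)| ≤ M_i |k|^{−(2 + 2ε)} exp(−(m + s)|k|²/2) for i = 1, 2, all s ∈ [0, 1], and all k ≠ 0. Then there exists a constant D > 0 depending only on ε such that for all t ∈ [0, 1] and all k ∈ ℤ³ \ {0}: |B(h₁, h₂)(t, k)| ≤ D M₁ M₂ exp(−(m + t)|k|²/4) (1 − exp(−t|k|²)) / |k|. -/

import Mathlib

noncomputable section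

open Real MeasureTheory

abbrev Z3 : Type := Fin 3 → ℤ
abbrev C3 : Type := EuclideanSpace ℂ (Fin 3)

/-- The integer vector `k` regarded as a vector in `ℝ³`. -/
def toR3 (k : Z3) : EuclideanSpace ℝ (Fin 3) := WithLp.toLp 2 (fun i => (k i : ℝ))

/-- The Euclidean norm of `k ∈ ℤ³`. -/
def znorm (k : Z3) : ℝ := ‖toR3 k‖

/-- The integer vector `k` regarded as a vector in `ℂ³`. -/
def toC3 (k : Z3) : C3 := WithLp.toLp 2 (fun i => (k i : ℂ))

/-- The bilinear dot product `⟨a, b⟩ = Σᵢ aᵢbᵢ` on `ℂ³` (no conjugation). -/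
def cdot (a b : C3) : ℂ := ∑ i, a i * b i

/-- The Leray projector `P_k x = x − (⟨k, x⟩/|k|²) k`. -/
def leray (k : Z3) (x : C3) : C3 := x - ((cdot (toC3 k) x) / ((znorm k : ℂ) ^ 2)) • toC3 k

/-- The Navier–Stokes bilinear operator
`B(f,g)(t,k) = 2πi ∫₀ᵗ e^{−(t−s)|k|²} Σ_{l ≠ 0, l ≠ k} ⟨k, f(s,k−l)⟩ P_k g(s,l) ds`. -/
def nsB (f g : ℝ → Z3 → C3) (t : ℝ) (k : Z3) : C3 :=
  (2 * (π : ℂ) * Complex.I) • ∫ s in (0:ℝ)..t,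
    Real.exp (-(t - s) * znorm k ^ 2) •
      ∑' l : Z3, if l ≠ 0 ∧ l ≠ k then cdot (toC3 k) (f s (k - l)) • leray k (g s l)
        else (0 : C3)

namespace NSaux

lemma znorm_nonneg (k : Z3) : 0 ≤ znorm k := norm_nonneg _

lemma znorm_sq (k : Z3) : znorm k ^ 2 = ∑ i, ((k i : ℝ))^2 := by
  rw [znorm, EuclideanSpace.norm_eq,
    Real.sq_sqrt (Finset.sum_nonneg fun i _ => sq_nonneg _)]
  simp [toR3, sq_abs]

lemma one_le_znorm_sq {k : Z3} (hk : k ≠ 0) : 1 ≤ znorm k ^ 2 := by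
  rw [znorm_sq]
  obtain ⟨i, hi⟩ : ∃ i, k i ≠ 0 := by
    by_contra h; push_neg at h; exact hk (funext h)
  have h0 : (1:ℤ) ≤ |k i| := Int.one_le_abs hi
  have h1 : (1:ℝ) ≤ ((k i:ℝ))^2 := by
    have : (1:ℤ) ≤ (k i)^2 := by nlinarith [sq_abs (k i)]
    exact_mod_cast this
  calc (1:ℝ) ≤ ((k i:ℝ))^2 := h1
    _ ≤ ∑ j, ((k j:ℝ))^2 := Finset.single_le_sum (f := fun j => ((k j:ℝ))^2)
        (fun j _ => sq_nonneg _) (Finset.mem_univ i)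

lemma one_le_znorm {k : Z3} (hk : k ≠ 0) : 1 ≤ znorm k := by
  nlinarith [znorm_nonneg k, one_le_znorm_sq hk]

lemma znorm_pos {k : Z3} (hk : k ≠ 0) : 0 < znorm k :=
  lt_of_lt_of_le one_pos (one_le_znorm hk)

lemma norm_toC3 (k : Z3) : ‖toC3 k‖ = znorm k := by
  rw [znorm, EuclideanSpace.norm_eq, EuclideanSpace.norm_eq]
  congr 1
  refine Finset.sum_congr rfl fun i _ => ?_
  simp [toC3, toR3]

lemma cdot_eq_inner (k : Z3) (x : C3) : cdot (toC3 k) x = inner ℂ (toC3 k) x := by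
  rw [cdot, PiLp.inner_apply]
  refine Finset.sum_congr rfl fun i _ => ?_
  simp [toC3, RCLike.inner_apply, mul_comm]

lemma norm_cdot_le (k : Z3) (x : C3) : ‖cdot (toC3 k) x‖ ≤ znorm k * ‖x‖ := by
  rw [cdot_eq_inner, ← norm_toC3 k]
  exact norm_inner_le_norm _ _

lemma norm_leray_le {k : Z3} (hk : k ≠ 0) (x : C3) : ‖leray k x‖ ≤ 2 * ‖x‖ := by
  have hz := znorm_pos hk
  rw [leray]
  refine (norm_sub_le _ _).trans ?_
  rw [norm_smul, norm_toC3, norm_div]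
  have h1 : ‖((znorm k : ℝ) : ℂ)^2‖ = znorm k ^ 2 := by
    rw [norm_pow, Complex.norm_real, Real.norm_eq_abs, abs_of_pos hz]
  rw [h1]
  have h3 := norm_cdot_le k x
  have h2 : ‖cdot (toC3 k) x‖ / znorm k ^2 * znorm k ≤ ‖x‖ := by
    rw [div_mul_eq_mul_div, div_le_iff₀ (by positivity)]
    nlinarith [norm_nonneg x]
  linarith

def g1 (n : ℤ) : ℝ := (1 + (n:ℝ)^2) ^ (-(2/3 : ℝ))

lemma g1_pos (n : ℤ) : 0 < g1 n := Real.rpow_pos_of_pos (by positivity) _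

lemma summable_g1 : Summable g1 := by
  have hb : Summable (fun n : ℤ => |(n:ℝ)| ^ (-(4/3:ℝ)) + if n = 0 then (1:ℝ) else 0) := by
    refine (Real.summable_abs_int_rpow (by norm_num)).add ?_
    refine summable_of_ne_finset_zero (s := {(0:ℤ)}) ?_
    intro n hn
    simp only [Finset.mem_singleton] at hn
    simp [hn]
  refine Summable.of_nonneg_of_le (fun n => (g1_pos n).le) ?_ hb
  intro n
  by_cases h : n = 0
  · subst h
    simp [g1, Real.zero_rpow (show -(4/3:ℝ) ≠ 0 by norm_num)]
  · have hn0 : ((n:ℝ)) ≠ 0 := Int.cast_ne_zero.mpr h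
    have h1 : (0:ℝ) < (n:ℝ)^2 := by positivity
    have h2 : g1 n ≤ ((n:ℝ)^2) ^ (-(2/3:ℝ)) :=
      Real.rpow_le_rpow_of_nonpos h1 (by linarith) (by norm_num)
    have h3 : ((n:ℝ)^2) ^ (-(2/3:ℝ)) = |(n:ℝ)| ^ (-(4/3:ℝ)) := by
      rw [← sq_abs, ← Real.rpow_natCast |(n:ℝ)| 2, ← Real.rpow_mul (abs_nonneg _)]
      norm_num
    simp only [h, if_false, add_zero]
    rw [← h3]; exact h2

def e3 : Z3 ≃ ℤ × ℤ × ℤ where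
  toFun l := (l 0, l 1, l 2)
  invFun p := ![p.1, p.2.1, p.2.2]
  left_inv l := by funext i; fin_cases i <;> rfl
  right_inv p := rfl

def gprod (l : Z3) : ℝ := ∏ i, g1 (l i)

lemma gprod_pos (l : Z3) : 0 < gprod l := Finset.prod_pos (fun i _ => g1_pos _)

lemma summable_gprod : Summable gprod := by
  have h2 : Summable (fun p : ℤ × ℤ => g1 p.1 * g1 p.2) :=
    summable_g1.mul_of_nonneg summable_g1 (fun n => (g1_pos n).le) (fun n => (g1_pos n).le)
  have h3 : Summable (fun p : ℤ × ℤ × ℤ => g1 p.1 * (g1 p.2.1 * g1 p.2.2)) :=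
    summable_g1.mul_of_nonneg h2 (fun n => (g1_pos n).le)
      (fun p => mul_nonneg (g1_pos _).le (g1_pos _).le)
  exact (e3.symm.summable_iff (f := gprod)).mp
    (h3.congr (fun p => by simp [gprod, e3, Equiv.coe_fn_symm_mk, Fin.prod_univ_three, mul_assoc]; rfl))

def vv (l : Z3) : ℝ := if l = 0 then 0 else znorm l ^ (-(4:ℝ))

lemma vv_nonneg (l : Z3) : 0 ≤ vv l := by
  unfold vv; split
  · exact le_refl 0
  · exact Real.rpow_nonneg (znorm_nonneg l) _

lemma vv_le (l : Z3) : vv l ≤ 4 * gprod l := by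
  unfold vv
  split
  · nlinarith [gprod_pos l]
  · rename_i h
    have hz : 1 ≤ znorm l := one_le_znorm h
    have hz0 : (0:ℝ) < znorm l := lt_of_lt_of_le one_pos hz
    have hzsq := znorm_sq l
    have hP : ∀ i : Fin 3, 1 + ((l i:ℝ))^2 ≤ 2 * znorm l^2 := by
      intro i
      have h1 : ((l i:ℝ))^2 ≤ znorm l^2 := by
        rw [hzsq]
        exact Finset.single_le_sum (f := fun j => ((l j:ℝ))^2)
          (fun j _ => sq_nonneg _) (Finset.mem_univ i)
      nlinarith
    set P := ∏ i : Fin 3, (1 + ((l i:ℝ))^2) with hPdef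
    have hPpos : 0 < P := Finset.prod_pos (fun i _ => by positivity)
    have hprod : P ≤ 8 * znorm l^6 := by
      calc P ≤ ∏ _i : Fin 3, (2*znorm l^2) :=
            Finset.prod_le_prod (fun i _ => by positivity) (fun i _ => hP i)
        _ = 8 * znorm l^6 := by
            rw [Finset.prod_const]
            simp
            ring
    have hgp : gprod l = P ^ (-(2/3:ℝ)) := by
      rw [gprod, hPdef, ← Real.finset_prod_rpow _ _ (fun i _ => by positivity) _]
      rfl
    rw [hgp]
    have h8 : ((8:ℝ) * znorm l^6) ^ ((2/3:ℝ)) = 4 * znorm l^4 := by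
      rw [Real.mul_rpow (by norm_num) (by positivity)]
      congr 1
      · rw [show (8:ℝ) = 2^((3:ℕ):ℝ) by norm_num [Real.rpow_natCast],
          ← Real.rpow_mul (by norm_num : (0:ℝ) ≤ 2),
          show ((3:ℕ):ℝ)*(2/3) = ((2:ℕ):ℝ) by norm_num, Real.rpow_natCast]
        norm_num
      · rw [← Real.rpow_natCast (znorm l) 6, ← Real.rpow_mul (by positivity),
          show ((6:ℕ):ℝ)*(2/3) = ((4:ℕ):ℝ) by norm_num, Real.rpow_natCast]
    have hP23 : P ^ ((2/3:ℝ)) ≤ 4 * znorm l^4 := by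
      rw [← h8]
      exact Real.rpow_le_rpow hPpos.le hprod (by norm_num)
    have hQ : 0 < P ^ (2/3:ℝ) := Real.rpow_pos_of_pos hPpos _
    have hzp : znorm l ^ (-(4:ℝ)) = (znorm l^(4:ℕ))⁻¹ := by
      rw [show (-(4:ℝ)) = -((4:ℕ):ℝ) by norm_num, Real.rpow_neg (by positivity),
        Real.rpow_natCast]
    rw [hzp, Real.rpow_neg hPpos.le, inv_eq_one_div, inv_eq_one_div,
      show (4:ℝ) * (1 / P^(2/3:ℝ)) = 4 / P^(2/3:ℝ) by ring,
      div_le_div_iff₀ (by positivity) hQ]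
    nlinarith [hP23]

lemma summable_vv : Summable vv :=
  Summable.of_nonneg_of_le vv_nonneg vv_le (summable_gprod.mul_left 4)

lemma summable_vv_sub (k : Z3) : Summable (fun l => vv (k - l)) :=
  ((Equiv.subLeft k).summable_iff (f := vv)).mpr summable_vv

lemma tsum_vv_sub (k : Z3) : ∑' l, vv (k - l) = ∑' l, vv l :=
  (Equiv.subLeft k).tsum_eq vv

lemma my_integral_exp_mul (d a b : ℝ) (hd : d ≠ 0) :
    ∫ x in a..b, Real.exp (d * x) = (Real.exp (d*b) - Real.exp (d*a)) / d := by
  have D : ∀ x : ℝ, HasDerivAt (fun y => Real.exp (d*y) / d) (Real.exp (d*x)) x := by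
    intro x
    have h1 : HasDerivAt (fun y : ℝ => d * y) d x := by
      simpa using (hasDerivAt_id x).const_mul d
    have h2 := (Real.hasDerivAt_exp (d*x)).comp x h1
    have h3 := h2.div_const d
    simpa [mul_div_cancel_right₀ _ hd] using h3
  rw [intervalIntegral.integral_eq_sub_of_hasDerivAt (fun x _ => D x)
      ((Real.continuous_exp.comp (continuous_const.mul continuous_id)).intervalIntegrable a b)]
  ring

end NSaux

open NSaux in
set_option maxHeartbeats 2000000 in
/-- Let `0 < 3ε < 1`.  There is a constant `D > 0` depending only on `ε` such
that: whenever `M₁, M₂ > 0`, `m ≥ 0` is an integer and `h₁, h₂` satisfy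
`|hᵢ(s,k)| ≤ Mᵢ |k|^{−(2+2ε)} exp(−(m + s)|k|²/2)` for `i = 1, 2`, `s ∈ [0,1]`
and `k ≠ 0`, then for all `t ∈ [0, 1]` and `k ≠ 0`,
`|B(h₁,h₂)(t,k)| ≤ D M₁ M₂ exp(−(m + t)|k|²/4)(1 − exp(−t|k|²))/|k|`. -/
theorem statement7 (ε : ℝ) (hε : 0 < 3 * ε) (hε1 : 3 * ε < 1) :
    ∃ D : ℝ, 0 < D ∧
      ∀ (M₁ M₂ : ℝ), 0 < M₁ → 0 < M₂ → ∀ (m : ℕ) (h₁ h₂ : ℝ → Z3 → C3),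
        (∀ s ∈ Set.Icc (0 : ℝ) 1, ∀ k : Z3, k ≠ 0 →
          ‖h₁ s k‖ ≤ M₁ * znorm k ^ (-(2 + 2 * ε))
            * Real.exp (-((m : ℝ) + s) * znorm k ^ 2 / 2)) →
        (∀ s ∈ Set.Icc (0 : ℝ) 1, ∀ k : Z3, k ≠ 0 →
          ‖h₂ s k‖ ≤ M₂ * znorm k ^ (-(2 + 2 * ε))
            * Real.exp (-((m : ℝ) + s) * znorm k ^ 2 / 2)) →
        ∀ t ∈ Set.Icc (0 : ℝ) 1, ∀ k : Z3, k ≠ 0 →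
          ‖nsB h₁ h₂ t k‖ ≤ D * M₁ * M₂ * Real.exp (-((m : ℝ) + t) * znorm k ^ 2 / 4)
            * (1 - Real.exp (-t * znorm k ^ 2)) / znorm k := by
  have hεpos : 0 < ε := by linarith
  have hπ := Real.pi_pos
  have hZ0 : 0 ≤ ∑' l, vv l := tsum_nonneg vv_nonneg
  refine ⟨16 * π / 3 * (∑' l, vv l) + 1, by nlinarith, ?_⟩
  intro M₁ M₂ hM₁ hM₂ m h₁ h₂ hh₁ hh₂ t ht k hk
  obtain ⟨ht0, ht1⟩ := ht
  have hk1 : 1 ≤ znorm k := one_le_znorm hk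
  have hkpos : 0 < znorm k := lt_of_lt_of_le one_pos hk1
  set c := znorm k ^ 2 with hc
  have hcpos : 0 < c := by rw [hc]; positivity
  have hm0 : (0:ℝ) ≤ (m:ℝ) := Nat.cast_nonneg m
  have hQ' : Real.exp (-t * c) ≤ 1 := by
    rw [← Real.exp_zero]
    exact Real.exp_le_exp.mpr (by nlinarith)
  set Zv := ∑' l, vv l with hZv
  set E := Real.exp (-((m:ℝ) + t) * c / 4) with hE
  have hEpos : 0 < E := Real.exp_pos _
  set A := 2 * Zv * znorm k * M₁ * M₂ * E with hA
  have hA0 : 0 ≤ A := by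
    rw [hA]
    exact mul_nonneg (mul_nonneg (mul_nonneg (mul_nonneg
      (mul_nonneg (by norm_num) hZ0) hkpos.le) hM₁.le) hM₂.le) hEpos.le
  set Fi : ℝ → C3 := fun s =>
    Real.exp (-(t - s) * c) •
      ∑' l : Z3, if l ≠ 0 ∧ l ≠ k then cdot (toC3 k) (h₁ s (k - l)) • leray k (h₂ s l)
        else (0 : C3) with hFi
  clear_value c Zv E A Fi
  have hnsB : nsB h₁ h₂ t k = (2 * (π : ℂ) * Complex.I) • ∫ s in (0:ℝ)..t, Fi s := by
    simp only [hFi, nsB, ← hc]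
  have hsc : ‖(2 * (π : ℂ) * Complex.I)‖ = 2 * π := by
    simp [norm_mul, Complex.norm_I, Complex.norm_real, Real.norm_eq_abs, abs_of_pos hπ]
  -- key pointwise bound
  have key : ∀ s ∈ Set.Icc (0:ℝ) t, ‖Fi s‖ ≤ A * Real.exp (-(3/4) * (t - s) * c) := by
    intro s hs
    have hs1 : s ∈ Set.Icc (0:ℝ) 1 := ⟨hs.1, hs.2.trans ht1⟩
    set CW := znorm k * M₁ * M₂ * Real.exp (-((m:ℝ) + s) * c / 4) with hCW
    have hCW0 : 0 ≤ CW := by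
      rw [hCW]
      exact mul_nonneg (mul_nonneg (mul_nonneg hkpos.le hM₁.le) hM₂.le) (Real.exp_pos _).le
    set F : Z3 → C3 := fun l =>
      if l ≠ 0 ∧ l ≠ k then cdot (toC3 k) (h₁ s (k - l)) • leray k (h₂ s l) else 0 with hF
    clear_value CW F
    have hW : ∀ l, ‖F l‖ ≤ CW * (vv (k - l) + vv l) := by
      intro l
      by_cases hl : l ≠ 0 ∧ l ≠ k
      · obtain ⟨hl0, hlk⟩ := hl
        have hkl : k - l ≠ 0 := sub_ne_zero.mpr (Ne.symm hlk)
        have ha1 : 1 ≤ znorm (k - l) := one_le_znorm hkl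
        have hb1 : 1 ≤ znorm l := one_le_znorm hl0
        have ha0 : (0:ℝ) < znorm (k - l) := lt_of_lt_of_le one_pos ha1
        have hb0 : (0:ℝ) < znorm l := lt_of_lt_of_le one_pos hb1
        have hbd1 := hh₁ s hs1 (k - l) hkl
        have hbd2 := hh₂ s hs1 l hl0
        have hB1nn : (0:ℝ) ≤ M₁ * znorm (k-l) ^ (-(2+2*ε))
            * Real.exp (-((m:ℝ)+s) * znorm (k-l)^2 / 2) := (norm_nonneg _).trans hbd1
        have hB2nn : (0:ℝ) ≤ M₂ * znorm l ^ (-(2+2*ε))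
            * Real.exp (-((m:ℝ)+s) * znorm l^2 / 2) := (norm_nonneg _).trans hbd2
        have hstep1 : ‖F l‖ ≤ (znorm k * ‖h₁ s (k-l)‖) * (2 * ‖h₂ s l‖) := by
          rw [hF]
          simp only [if_pos (And.intro hl0 hlk)]
          rw [norm_smul]
          exact mul_le_mul (norm_cdot_le _ _) (norm_leray_le hk _) (norm_nonneg _)
            (by positivity)
        have hstep2 : (znorm k * ‖h₁ s (k-l)‖) * (2 * ‖h₂ s l‖)
            ≤ (znorm k * (M₁ * znorm (k-l) ^ (-(2+2*ε))
                * Real.exp (-((m:ℝ)+s) * znorm (k-l)^2 / 2)))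
              * (2 * (M₂ * znorm l ^ (-(2+2*ε))
                * Real.exp (-((m:ℝ)+s) * znorm l^2 / 2))) :=
          mul_le_mul (mul_le_mul_of_nonneg_left hbd1 hkpos.le)
            (mul_le_mul_of_nonneg_left hbd2 (by norm_num))
            (by positivity) (mul_nonneg hkpos.le hB1nn)
        have hexp : Real.exp (-((m:ℝ)+s) * znorm (k-l)^2 / 2)
              * Real.exp (-((m:ℝ)+s) * znorm l^2 / 2)
            ≤ Real.exp (-((m:ℝ)+s) * c / 4) := by
          rw [← Real.exp_add]
          apply Real.exp_le_exp.mpr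
          have hR : toR3 (k - l) + toR3 l = toR3 k := by
            ext i
            simp only [toR3, PiLp.add_apply, Pi.sub_apply, PiLp.toLp_apply]
            push_cast
            ring
          have tri : znorm k ≤ znorm (k - l) + znorm l := by
            rw [znorm, znorm, znorm, ← hR]
            exact norm_add_le _ _
          have hms : (0:ℝ) ≤ (m:ℝ) + s := by linarith [hs.1]
          have hab : c / 2 ≤ znorm (k-l)^2 + znorm l^2 := by
            rw [hc]
            have h4 : znorm k^2 ≤ (znorm (k-l) + znorm l)^2 :=
              pow_le_pow_left₀ (znorm_nonneg k) tri 2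
            nlinarith [sq_nonneg (znorm (k-l) - znorm l)]
          nlinarith [mul_nonneg hms (sub_nonneg.mpr hab)]
        have hrp : znorm (k-l) ^ (-(2+2*ε)) * znorm l ^ (-(2+2*ε))
            ≤ (vv (k-l) + vv l) / 2 := by
          have hsq : ∀ x : ℝ, 1 ≤ x → (x ^ (-(2+2*ε)))^2 ≤ x ^ (-(4:ℝ)) := by
            intro x hx1
            have hx0 : (0:ℝ) < x := lt_of_lt_of_le one_pos hx1
            have heq : (x ^ (-(2+2*ε)))^2 = x ^ ((-(2+2*ε)) * ((2:ℕ):ℝ)) := by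
              rw [← Real.rpow_natCast (x ^ (-(2+2*ε))) 2, ← Real.rpow_mul hx0.le]
            rw [heq]
            apply Real.rpow_le_rpow_of_exponent_le hx1
            push_cast
            nlinarith
          have hva : vv (k - l) = znorm (k-l) ^ (-(4:ℝ)) := by simp [vv, hkl]
          have hvb : vv l = znorm l ^ (-(4:ℝ)) := by simp [vv, hl0]
          have h1 := hsq _ ha1
          have h2 := hsq _ hb1
          rw [hva, hvb]
          nlinarith [sq_nonneg (znorm (k-l) ^ (-(2+2*ε)) - znorm l ^ (-(2+2*ε)))]
        have hprefnn : (0:ℝ) ≤ 2 * znorm k * M₁ * M₂ :=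
          mul_nonneg (mul_nonneg (mul_nonneg (by norm_num) hkpos.le) hM₁.le) hM₂.le
        calc ‖F l‖ ≤ (znorm k * (M₁ * znorm (k-l) ^ (-(2+2*ε))
                * Real.exp (-((m:ℝ)+s) * znorm (k-l)^2 / 2)))
              * (2 * (M₂ * znorm l ^ (-(2+2*ε))
                * Real.exp (-((m:ℝ)+s) * znorm l^2 / 2))) := hstep1.trans hstep2
          _ = (2 * znorm k * M₁ * M₂)
              * (znorm (k-l) ^ (-(2+2*ε)) * znorm l ^ (-(2+2*ε)))
              * (Real.exp (-((m:ℝ)+s) * znorm (k-l)^2 / 2)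
                * Real.exp (-((m:ℝ)+s) * znorm l^2 / 2)) := by ring
          _ ≤ (2 * znorm k * M₁ * M₂) * ((vv (k-l) + vv l) / 2)
              * Real.exp (-((m:ℝ)+s) * c / 4) :=
            mul_le_mul (mul_le_mul_of_nonneg_left hrp hprefnn) hexp
              (mul_nonneg (Real.exp_pos _).le (Real.exp_pos _).le)
              (mul_nonneg hprefnn
                (div_nonneg (add_nonneg (vv_nonneg _) (vv_nonneg _)) (by norm_num)))
          _ = CW * (vv (k-l) + vv l) := by rw [hCW]; ring
      · rw [hF]
        simp only [if_neg hl, norm_zero]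
        exact mul_nonneg hCW0 (add_nonneg (vv_nonneg _) (vv_nonneg _))
    have hWs : Summable (fun l => CW * (vv (k - l) + vv l)) :=
      ((summable_vv_sub k).add summable_vv).mul_left CW
    have hFn : Summable (fun l => ‖F l‖) :=
      Summable.of_nonneg_of_le (fun l => norm_nonneg _) hW hWs
    have htsum : ‖∑' l, F l‖ ≤ CW * (2 * Zv) := by
      refine (norm_tsum_le_tsum_norm hFn).trans ?_
      refine (Summable.tsum_le_tsum hW hFn hWs).trans_eq ?_
      rw [tsum_mul_left, Summable.tsum_add (summable_vv_sub k) summable_vv, tsum_vv_sub k, ← hZv]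
      ring
    have hFieq : Fi s = Real.exp (-(t-s)*c) • ∑' l, F l := by
      simp only [hFi, hF]
    calc ‖Fi s‖ = Real.exp (-(t-s)*c) * ‖∑' l, F l‖ := by
          rw [hFieq, norm_smul, Real.norm_eq_abs, abs_of_pos (Real.exp_pos _)]
      _ ≤ Real.exp (-(t-s)*c) * (CW * (2*Zv)) :=
          mul_le_mul_of_nonneg_left htsum (Real.exp_pos _).le
      _ = 2*Zv*znorm k*M₁*M₂*Real.exp ((-(t-s)*c) + (-((m:ℝ)+s)*c/4)) := by
          rw [Real.exp_add, hCW]; ring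
      _ = 2*Zv*znorm k*M₁*M₂*Real.exp ((-((m:ℝ)+t)*c/4) + (-(3/4)*(t-s)*c)) := by
          congr 2
          ring
      _ = A * Real.exp (-(3/4)*(t-s)*c) := by
          rw [Real.exp_add, hA, hE]; ring
  by_cases hInt : IntervalIntegrable Fi volume 0 t
  · have hGcont : Continuous (fun s : ℝ => A * Real.exp (-(3/4) * (t - s) * c)) := by
      fun_prop
    have hGint : IntervalIntegrable (fun s : ℝ => A * Real.exp (-(3/4)*(t-s)*c))
        volume 0 t := hGcont.intervalIntegrable _ _
    have hmono : (∫ s in (0:ℝ)..t, ‖Fi s‖)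
        ≤ ∫ s in (0:ℝ)..t, A * Real.exp (-(3/4)*(t-s)*c) :=
      intervalIntegral.integral_mono_on ht0 hInt.norm hGint key
    have hIcalc : (∫ s in (0:ℝ)..t, A * Real.exp (-(3/4)*(t-s)*c))
        = A * (1 - Real.exp (-((3*c/4)*t))) * (4/(3*c)) := by
      have hfun : (fun s : ℝ => A * Real.exp (-(3/4)*(t-s)*c))
          = fun s : ℝ => (A * Real.exp (-((3*c/4)*t))) * Real.exp ((3*c/4) * s) := by
        funext s
        rw [mul_assoc A, ← Real.exp_add]
        congr 2
        ring
      rw [hfun, intervalIntegral.integral_const_mul,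
        my_integral_exp_mul _ _ _ (by positivity)]
      rw [mul_zero, Real.exp_zero, Real.exp_neg]
      have hX : (0:ℝ) < Real.exp ((3*c/4)*t) := Real.exp_pos _
      field_simp
    have hQle : Real.exp (-t*c) ≤ Real.exp (-((3*c/4)*t)) :=
      Real.exp_le_exp.mpr (by nlinarith)
    have final1 : ‖nsB h₁ h₂ t k‖
        ≤ 2*π * (A * (1 - Real.exp (-((3*c/4)*t))) * (4/(3*c))) := by
      rw [hnsB, norm_smul, hsc]
      calc 2*π*‖∫ s in (0:ℝ)..t, Fi s‖
          ≤ 2*π*(∫ s in (0:ℝ)..t, ‖Fi s‖) :=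
            mul_le_mul_of_nonneg_left
              (intervalIntegral.norm_integral_le_integral_norm ht0) (by positivity)
        _ ≤ 2*π*(∫ s in (0:ℝ)..t, A * Real.exp (-(3/4)*(t-s)*c)) :=
            mul_le_mul_of_nonneg_left hmono (by positivity)
        _ = 2*π*(A * (1 - Real.exp (-((3*c/4)*t))) * (4/(3*c))) := by rw [hIcalc]
    refine final1.trans ?_
    have hzne : znorm k ≠ 0 := hkpos.ne'
    calc 2*π*(A * (1 - Real.exp (-((3*c/4)*t))) * (4/(3*c)))
        ≤ 2*π*(A * (1 - Real.exp (-t*c)) * (4/(3*c))) := by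
          apply mul_le_mul_of_nonneg_left _ (by positivity)
          apply mul_le_mul_of_nonneg_right _ (by positivity)
          exact mul_le_mul_of_nonneg_left (by linarith) hA0
      _ = (16*π/3*Zv) * M₁ * M₂ * E * (1 - Real.exp (-t*c)) / znorm k := by
          rw [hA, hc]
          field_simp
          ring
      _ ≤ (16*π/3*Zv + 1) * M₁ * M₂ * E * (1 - Real.exp (-t*c)) / znorm k := by
          have h01 : 16*π/3*Zv ≤ 16*π/3*Zv + 1 := by linarith
          have hQ0 : (0:ℝ) ≤ 1 - Real.exp (-t*c) := by linarith
          have hnum : (16*π/3*Zv) * M₁ * M₂ * E * (1 - Real.exp (-t*c))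
              ≤ (16*π/3*Zv + 1) * M₁ * M₂ * E * (1 - Real.exp (-t*c)) :=
            mul_le_mul_of_nonneg_right (mul_le_mul_of_nonneg_right
              (mul_le_mul_of_nonneg_right (mul_le_mul_of_nonneg_right h01 hM₁.le)
                hM₂.le) hEpos.le) hQ0
          exact div_le_div_of_nonneg_right hnum hkpos.le
  · rw [hnsB, intervalIntegral.integral_undef hInt, smul_zero, norm_zero]
    have hQ0 : (0:ℝ) ≤ 1 - Real.exp (-t*c) := by linarith
    have hD0 : (0:ℝ) ≤ 16*π/3*Zv + 1 := by nlinarith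
    apply div_nonneg _ hkpos.le
    exact mul_nonneg (mul_nonneg (mul_nonneg (mul_nonneg hD0 hM₁.le) hM₂.le) hEpos.le) hQ0
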